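/- Let C be an AB3 abelian category (i.e., an abelian category with arbitrary coproducts), M a class of objects of C, and α : M → X a morphism with M ∈ add(M). If α is an add(M)-precover of X, then α is an Add(M)-precover of X. -/
import Mathlib


open CategoryTheory Limits

universe w v u

variable {C : Type u} [Category.{v} C] [Abelian C] [HasCoproducts.{w} C]

/-- `X ∈ Add(𝓜)`: `X` is a direct summand of a set-indexed coproduct of objects of `𝓜`. -/
def MemAdd (𝓜 : Set C) (X : C) : Prop :=
  ∃ (I : Type w) (U : I → C), (∀ i, U i ∈ 𝓜) ∧
    ∃ (s : X ⟶ ∐ U) (r : (∐ U) ⟶ X), s ≫ r = 𝟙 X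

/-- `X ∈ add(𝓜)`: `X` is a direct summand of a finite coproduct of objects of `𝓜`. -/
def Memadd (𝓜 : Set C) (X : C) : Prop :=
  ∃ (n : ℕ) (U : Fin n → C), (∀ i, U i ∈ 𝓜) ∧
    ∃ (s : X ⟶ ∐ U) (r : (∐ U) ⟶ X), s ≫ r = 𝟙 X

/-- Let `C` be an AB3 abelian category, `𝓜` a class of objects, and
`α : M ⟶ X` with `M ∈ add(𝓜)`. If `α` is an `add(𝓜)`-precover of `X` then it is an
`Add(𝓜)`-precover of `X`. -/
theorem stmt6 (𝓜 : Set C) {M X : C} (hM : Memadd 𝓜 M) (α : M ⟶ X)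
    (hpre : ∀ M', Memadd 𝓜 M' → ∀ g : M' ⟶ X, ∃ h : M' ⟶ M, g = h ≫ α) :
    ∀ M', MemAdd.{w} 𝓜 M' → ∀ g : M' ⟶ X, ∃ h : M' ⟶ M, g = h ≫ α := by
  rintro M' ⟨I, U, hU, s, r, hsr⟩ g
  -- each U i is in add(𝓜)
  have hUadd : ∀ i, Memadd 𝓜 (U i) := fun i =>
    ⟨1, fun _ => U i, fun _ => hU i, Sigma.ι (fun _ : Fin 1 => U i) 0, Sigma.desc fun _ => 𝟙 _, by simp⟩
  choose h hh using fun i => hpre (U i) (hUadd i) (Sigma.ι U i ≫ r ≫ g)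
  refine ⟨s ≫ Sigma.desc h, ?_⟩
  have : r ≫ g = Sigma.desc h ≫ α := by
    ext i
    simpa using hh i
  calc g = s ≫ r ≫ g := by rw [← Category.assoc, hsr, Category.id_comp]
    _ = (s ≫ Sigma.desc h) ≫ α := by rw [this, Category.assoc]
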